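/- Let X be a Kan complex. Then its décalage Dec X is also a Kan complex, and the natural map ∂ : Dec X → X (given in degree n by the last face operator X_{n+1} → X_n) is a Kan fibration. -/

import Mathlib

open CategoryTheory Simplicial Opposite

namespace SimplexCategory

/-- The "add a top element" endofunctor of the simplex category, on objects. -/
def shiftObj (x : SimplexCategory) : SimplexCategory := mk (x.len + 1)

/-- The "add a top element" endofunctor, on morphisms: extend a monotone map by
sending the new top element to the new top element. -/
def shiftMap {x y : SimplexCategory} (f : x ⟶ y) : shiftObj x ⟶ shiftObj y :=
  Hom.mk
    { toFun := fun i =>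
        if h : (i : ℕ) < x.len + 1 then (f.toOrderHom ⟨(i : ℕ), h⟩).castSucc
        else Fin.last (y.len + 1)
      monotone' := by
        intro i j hij
        have hij' : (i : ℕ) ≤ (j : ℕ) := hij
        dsimp only
        change (if h : (i : ℕ) < x.len + 1 then (f.toOrderHom ⟨(i : ℕ), h⟩).castSucc
            else Fin.last (y.len + 1) : Fin (y.len + 2)) ≤
          (if h : (j : ℕ) < x.len + 1 then (f.toOrderHom ⟨(j : ℕ), h⟩).castSucc
            else Fin.last (y.len + 1) : Fin (y.len + 2))
        by_cases hi : (i : ℕ) < x.len + 1 <;> by_cases hj : (j : ℕ) < x.len + 1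
        · rw [dif_pos hi, dif_pos hj]
          exact Fin.castSucc_le_castSucc_iff.mpr
            (f.toOrderHom.monotone (Fin.mk_le_mk.mpr hij'))
        · rw [dif_pos hi, dif_neg hj]
          exact Fin.le_last _
        · omega
        · rw [dif_neg hi, dif_neg hj] }

lemma shiftMap_apply_lt {x y : SimplexCategory} (f : x ⟶ y)
    (i : Fin ((shiftObj x).len + 1)) (h : (i : ℕ) < x.len + 1) :
    (((shiftMap f).toOrderHom i : Fin ((shiftObj y).len + 1)) : ℕ)
      = ((f.toOrderHom ⟨(i : ℕ), h⟩ : Fin (y.len + 1)) : ℕ) := by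
  show ((if h : (i : ℕ) < x.len + 1 then (f.toOrderHom ⟨(i : ℕ), h⟩).castSucc
        else Fin.last (y.len + 1) : Fin (y.len + 2)) : ℕ) = _
  rw [dif_pos h, Fin.val_castSucc]

lemma shiftMap_apply_last {x y : SimplexCategory} (f : x ⟶ y)
    (i : Fin ((shiftObj x).len + 1)) (h : ¬ (i : ℕ) < x.len + 1) :
    (((shiftMap f).toOrderHom i : Fin ((shiftObj y).len + 1)) : ℕ) = y.len + 1 := by
  show ((if h : (i : ℕ) < x.len + 1 then (f.toOrderHom ⟨(i : ℕ), h⟩).castSucc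
        else Fin.last (y.len + 1) : Fin (y.len + 2)) : ℕ) = _
  rw [dif_neg h, Fin.val_last]

/-- The "add a new top element" endofunctor of the simplex category. -/
def shiftFunctor : SimplexCategory ⥤ SimplexCategory where
  obj := shiftObj
  map := shiftMap
  map_id x := by
    ext i
    by_cases h : (i : ℕ) < x.len + 1
    · rw [shiftMap_apply_lt _ i h]
      simp
    · rw [shiftMap_apply_last _ i h]
      have := i.isLt
      simp only [shiftObj, len_mk] at this ⊢
      simp only [id_toOrderHom, OrderHom.id_coe, id_eq]
      change (i : ℕ) < x.len + 1 + 1 at this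
      change x.len + 1 = (i : ℕ)
      omega
  map_comp {x y z} f g := by
    ext i
    rw [comp_toOrderHom]
    simp only [OrderHom.comp_coe, Function.comp_apply]
    by_cases h : (i : ℕ) < x.len + 1
    · have h1 := shiftMap_apply_lt f i h
      have h' : (((shiftMap f).toOrderHom i : Fin ((shiftObj y).len + 1)) : ℕ) < y.len + 1 := by
        rw [h1]; exact (f.toOrderHom ⟨(i : ℕ), h⟩).isLt
      rw [shiftMap_apply_lt (f ≫ g) i h, shiftMap_apply_lt g _ h', comp_toOrderHom]
      simp only [OrderHom.comp_coe, Function.comp_apply]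
      have h2 : (⟨(((shiftMap f).toOrderHom i : Fin ((shiftObj y).len + 1)) : ℕ), h'⟩ :
          Fin (y.len + 1)) = f.toOrderHom ⟨(i : ℕ), h⟩ := Fin.ext h1
      rw [h2]
    · rw [shiftMap_apply_last (f ≫ g) i h,
        shiftMap_apply_last g _ (by rw [shiftMap_apply_last f i h]; omega)]

/-- The last face inclusion `x ⟶ shiftObj x`. -/
def lastFaceIncl (x : SimplexCategory) : x ⟶ shiftObj x :=
  Hom.mk ⟨Fin.castSucc, fun _ _ h => Fin.castSucc_le_castSucc_iff.mpr h⟩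

lemma lastFaceIncl_apply (x : SimplexCategory) (i : Fin (x.len + 1)) :
    ((lastFaceIncl x).toOrderHom i : ℕ) = (i : ℕ) := rfl

end SimplexCategory

namespace SSet

/-- The décalage of a simplicial set:  `(Dec X)ₙ = Xₙ₊₁`, forgetting the last face
and degeneracy operators. -/
def Dec (X : SSet.{0}) : SSet.{0} := SimplexCategory.shiftFunctor.op ⋙ X

/-- The natural "last face" map `∂ : Dec X ⟶ X`. -/
def decAug (X : SSet.{0}) : Dec X ⟶ X where
  app x := X.map (SimplexCategory.lastFaceIncl x.unop).op
  naturality {a b} u := by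
    dsimp [Dec]
    erw [← X.map_comp, ← X.map_comp]
    congr 1
    erw [show (SimplexCategory.shiftFunctor.map u.unop).op ≫
        (SimplexCategory.lastFaceIncl b.unop).op
        = (SimplexCategory.lastFaceIncl b.unop ≫ SimplexCategory.shiftFunctor.map u.unop).op
        from rfl,
      show (SimplexCategory.lastFaceIncl a.unop).op ≫ u
        = (u.unop ≫ SimplexCategory.lastFaceIncl a.unop).op from rfl]
    congr 1
    ext i
    erw [SimplexCategory.comp_toOrderHom, SimplexCategory.comp_toOrderHom]
    simp only [OrderHom.comp_coe, Function.comp_apply]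
    have hlt : (((SimplexCategory.lastFaceIncl b.unop).toOrderHom i : _) : ℕ)
        < b.unop.len + 1 := by
      rw [SimplexCategory.lastFaceIncl_apply]; exact i.isLt
    refine (SimplexCategory.shiftMap_apply_lt u.unop _ hlt).trans ?_
    simp only [SimplexCategory.lastFaceIncl_apply, Fin.eta]
    exact (SimplexCategory.lastFaceIncl_apply a.unop _).symm

end SSet

namespace SSet

/-- A simplicial set is a Kan complex if every horn `Λ[n, k] → X` for `n ≥ 1`,
`0 ≤ k ≤ n`, extends along the horn inclusion `Λ[n, k] ↪ Δ[n]`. -/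
def IsKanComplex (S : SSet.{0}) : Prop :=
  ∀ ⦃n : ℕ⦄ ⦃i : Fin (n + 2)⦄ (σ₀ : (Λ[n + 1, i] : SSet.{0}) ⟶ S),
    ∃ σ : Δ[n + 1] ⟶ S, σ₀ = Λ[n + 1, i].ι ≫ σ

/-- A map of simplicial sets is a Kan fibration if it has the right lifting property
with respect to all horn inclusions `Λ[n, k] ↪ Δ[n]` for `n ≥ 1`, `0 ≤ k ≤ n`. -/
def IsKanFibration {S T : SSet.{0}} (f : S ⟶ T) : Prop :=
  ∀ ⦃n : ℕ⦄ ⦃i : Fin (n + 2)⦄, HasLiftingProperty Λ[n + 1, i].ι f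

end SSet


section DecalageProofAux

open CategoryTheory Simplicial Opposite SimplexCategory SSet

namespace DecPf

/-- The number of inputs which `φ` maps strictly below the top element `n+2`. -/
def cnum {n : ℕ} {a : SimplexCategory} (φ : a ⟶ SimplexCategory.mk (n+2)) : ℕ :=
  (Finset.univ.filter fun k : Fin (a.len + 1) => ((φ.toOrderHom k : Fin (n+3)) : ℕ) < n + 2).card

lemma cnum_le {n : ℕ} {a : SimplexCategory} (φ : a ⟶ SimplexCategory.mk (n+2)) :
    cnum φ ≤ a.len + 1 := by
  refine (Finset.card_filter_le _ _).trans ?_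
  simp

lemma lt_cnum_iff {n : ℕ} {a : SimplexCategory} (φ : a ⟶ SimplexCategory.mk (n+2))
    (k : Fin (a.len + 1)) : (k : ℕ) < cnum φ ↔ ((φ.toOrderHom k : Fin (n+3)) : ℕ) < n + 2 := by
  constructor
  · intro h
    by_contra hk
    have hsub : (Finset.univ.filter
        fun j : Fin (a.len + 1) => ((φ.toOrderHom j : Fin (n+3)) : ℕ) < n + 2) ⊆ Finset.Iio k := by
      intro j hj
      simp only [Finset.mem_filter, Finset.mem_univ, true_and] at hj
      rw [Finset.mem_Iio]
      by_contra hjk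
      push_neg at hjk
      have hmono := φ.toOrderHom.monotone hjk
      rw [Fin.le_def] at hmono
      omega
    have hcard := Finset.card_le_card hsub
    rw [Fin.card_Iio] at hcard
    have : cnum φ ≤ (k : ℕ) := hcard
    omega
  · intro h
    have hsub : Finset.Iic k ⊆ (Finset.univ.filter
        fun j : Fin (a.len + 1) => ((φ.toOrderHom j : Fin (n+3)) : ℕ) < n + 2) := by
      intro j hj
      rw [Finset.mem_Iic] at hj
      simp only [Finset.mem_filter, Finset.mem_univ, true_and]
      have hmono := φ.toOrderHom.monotone hj
      rw [Fin.le_def] at hmono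
      omega
    have hcard := Finset.card_le_card hsub
    rw [Fin.card_Iic] at hcard
    have : (k : ℕ) + 1 ≤ cnum φ := hcard
    omega

lemma ne_univ_iff {N : ℕ} (ii : Fin (N+1)) (s : Set (Fin (N+1))) :
    s ∪ {ii} ≠ Set.univ ↔ ∃ w, w ∉ s ∧ w ≠ ii := by
  rw [Set.ne_univ_iff_exists_notMem]
  simp only [Set.mem_union, Set.mem_singleton_iff, not_or]

lemma val_lt {m : ℕ} (x : Fin ((SimplexCategory.mk m).len + 1)) : (x : ℕ) < m + 1 := x.isLt

/-- An element of a horn, from a morphism in the simplex category. -/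
def hornElt {N : ℕ} {ii : Fin (N + 2)} {a : SimplexCategory} (ψ : a ⟶ SimplexCategory.mk (N + 1))
    (h : Set.range ψ.toOrderHom ∪ {ii} ≠ Set.univ) : (Λ[N + 1, ii] : SSet.{0}).obj (op a) :=
  ⟨⟨ψ⟩, h⟩

lemma hornElt_eq {N : ℕ} {ii : Fin (N + 2)} {a : SimplexCategory}
    {ψ ψ' : a ⟶ SimplexCategory.mk (N + 1)} (h : _) (h' : _) (e : ψ = ψ') :
    hornElt (ii := ii) ψ h = hornElt ψ' h' :=
  Subtype.ext (congrArg ULift.up e)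

/-- Compress a map that avoids the top element. -/
def toLow {n : ℕ} {a : SimplexCategory} (φ : a ⟶ SimplexCategory.mk (n+2))
    (h : ∀ k, ((φ.toOrderHom k : Fin (n+3)) : ℕ) < n + 2) : a ⟶ SimplexCategory.mk (n+1) :=
  Hom.mk
    { toFun := fun k => ⟨((φ.toOrderHom k : Fin (n+3)) : ℕ), h k⟩
      monotone' := fun _ _ hkj => φ.toOrderHom.monotone hkj }

lemma toLow_val {n : ℕ} {a : SimplexCategory} (φ : a ⟶ SimplexCategory.mk (n+2))
    (h : ∀ k, ((φ.toOrderHom k : Fin (n+3)) : ℕ) < n + 2) (k : Fin (a.len + 1)) :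
    (((toLow φ h).toOrderHom k : Fin (n+2)) : ℕ) = ((φ.toOrderHom k : Fin (n+3)) : ℕ) := rfl

/-- The inclusion of an initial segment. -/
def castIncl {c : ℕ} {a : SimplexCategory} (h : c ≤ a.len) : SimplexCategory.mk c ⟶ a :=
  Hom.mk
    { toFun := fun j => ⟨(j : ℕ), by
        have hj : (j : ℕ) < c + 1 := j.isLt
        omega⟩
      monotone' := fun _ _ hkj => hkj }

lemma castIncl_val {c : ℕ} {a : SimplexCategory} (h : c ≤ a.len) (j : Fin (c+1)) :
    (((castIncl h).toOrderHom j : Fin (a.len + 1)) : ℕ) = (j : ℕ) := rfl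

/-- The part of `φ` lying below the top element. -/
def core {n : ℕ} {a : SimplexCategory} (φ : a ⟶ SimplexCategory.mk (n+2))
    (h1 : 0 < cnum φ) (h2 : cnum φ ≤ a.len + 1) :
    SimplexCategory.mk (cnum φ - 1) ⟶ SimplexCategory.mk (n+1) :=
  toLow (castIncl (by omega) ≫ φ) (by
    intro k
    have hk : (k : ℕ) < cnum φ - 1 + 1 := k.isLt
    refine (lt_cnum_iff φ _).1 ?_
    rw [castIncl_val]
    omega)

lemma core_val {n : ℕ} {a : SimplexCategory} (φ : a ⟶ SimplexCategory.mk (n+2))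
    (h1 : 0 < cnum φ) (h2 : cnum φ ≤ a.len + 1) (j : Fin (cnum φ - 1 + 1)) :
    (((core φ h1 h2).toOrderHom j : Fin (n+2)) : ℕ)
      = ((φ.toOrderHom ⟨(j : ℕ), by have := j.isLt; omega⟩ : Fin (n+3)) : ℕ) := rfl

/-- The projection collapsing everything above the lower part. -/
def proj {n : ℕ} {a : SimplexCategory} (φ : a ⟶ SimplexCategory.mk (n+2))
    (h1 : 0 < cnum φ) (h2 : cnum φ ≤ a.len + 1) :
    a ⟶ shiftObj (SimplexCategory.mk (cnum φ - 1)) :=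
  Hom.mk
    { toFun := fun k => ⟨min (k : ℕ) (cnum φ - 1 + 1), Nat.lt_succ_of_le (min_le_right _ _)⟩
      monotone' := by
        intro k j hkj
        have hkj' : (k : ℕ) ≤ (j : ℕ) := hkj
        simp only [Fin.mk_le_mk]
        omega }

lemma proj_val {n : ℕ} {a : SimplexCategory} (φ : a ⟶ SimplexCategory.mk (n+2))
    (h1 : 0 < cnum φ) (h2 : cnum φ ≤ a.len + 1) (k : Fin (a.len + 1)) :
    (((proj φ h1 h2).toOrderHom k : Fin (cnum φ - 1 + 2)) : ℕ) = min (k : ℕ) (cnum φ - 1 + 1) :=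
  rfl

section

variable {n : ℕ} {i : Fin (n+2)}

lemma vert_mem {j : Fin (n+2)} (hw : ∃ w : Fin (n+2), w ≠ j ∧ w ≠ i) :
    Set.range ((SimplexCategory.const (SimplexCategory.mk 0) (SimplexCategory.mk (n+1))
      j).toOrderHom) ∪ {i} ≠ Set.univ := by
  rw [ne_univ_iff]
  obtain ⟨w, h1, h2⟩ := hw
  refine ⟨w, ?_, h2⟩
  rintro ⟨k, hk⟩
  simp only [SimplexCategory.const_apply] at hk
  exact h1 hk.symm

lemma vertI_mem : Set.range ((SimplexCategory.const (SimplexCategory.mk 0)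
    (SimplexCategory.mk (n+1)) i).toOrderHom) ∪ {i} ≠ Set.univ := by
  refine vert_mem ?_
  obtain ⟨w, hw⟩ := exists_ne i
  exact ⟨w, hw, hw⟩

lemma core_mem {a : SimplexCategory} {φ : a ⟶ SimplexCategory.mk (n+2)}
    (hφ : Set.range φ.toOrderHom ∪ {i.castSucc} ≠ Set.univ)
    (h1 : 0 < cnum φ) (h2 : cnum φ ≤ a.len + 1) (h3 : cnum φ ≤ a.len) :
    Set.range ((core φ h1 h2).toOrderHom) ∪ {i} ≠ Set.univ := by
  rw [ne_univ_iff] at hφ ⊢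
  obtain ⟨w, hw1, hw2⟩ := hφ
  have htop : ((φ.toOrderHom (Fin.last a.len) : Fin (n+3)) : ℕ) = n + 2 := by
    have hiff := (lt_cnum_iff φ (Fin.last a.len)).2
    have hb := val_lt (φ.toOrderHom (Fin.last a.len))
    by_contra hne
    have := hiff (by omega)
    rw [Fin.val_last] at this
    omega
  have hwv : (w : ℕ) ≠ n + 2 := by
    intro he
    exact hw1 ⟨Fin.last a.len, Fin.ext (by rw [htop, he])⟩
  have hwlt : (w : ℕ) < n + 2 := by have := val_lt w; omega
  refine ⟨⟨(w : ℕ), hwlt⟩, ?_, ?_⟩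
  · rintro ⟨j, hj⟩
    apply hw1
    refine ⟨⟨(j : ℕ), by have := val_lt j; omega⟩, Fin.ext ?_⟩
    have hval := congrArg Fin.val hj
    rw [core_val] at hval
    exact hval
  · intro he
    apply hw2
    apply Fin.ext
    rw [Fin.coe_castSucc]
    exact congrArg Fin.val he

variable (X : SSet.{0})

/-- The extension of the lifting data to the bigger horn, on a single simplex `φ`. -/
def fill (u : (Λ[n+1, i] : SSet.{0}) ⟶ SSet.Dec X)
    (y : X.obj (op (SimplexCategory.mk (n+1))))
    {a : SimplexCategory} (φ : a ⟶ SimplexCategory.mk (n+2))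
    (hφ : Set.range φ.toOrderHom ∪ {i.castSucc} ≠ Set.univ) : X.obj (op a) :=
  if h1 : cnum φ = a.len + 1 then
    X.map (toLow φ (fun k => (lt_cnum_iff φ k).1 (by rw [h1]; exact k.isLt))).op y
  else if h0 : cnum φ = 0 then
    X.map (SimplexCategory.const a (SimplexCategory.mk 1) 1).op
      (u.app (op (SimplexCategory.mk 0))
        (hornElt (SimplexCategory.const (SimplexCategory.mk 0) (SimplexCategory.mk (n+1)) i)
          vertI_mem))
  else
    X.map (proj φ (by omega) (cnum_le φ)).op
      (u.app (op (SimplexCategory.mk (cnum φ - 1)))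
        (hornElt (core φ (by omega) (cnum_le φ))
          (core_mem hφ (by omega) (cnum_le φ) (by have := cnum_le φ; omega))))

lemma fill_eq_low (u : (Λ[n+1, i] : SSet.{0}) ⟶ SSet.Dec X)
    (y : X.obj (op (SimplexCategory.mk (n+1))))
    {a : SimplexCategory} (φ : a ⟶ SimplexCategory.mk (n+2))
    (hφ : Set.range φ.toOrderHom ∪ {i.castSucc} ≠ Set.univ)
    (hall : ∀ k, ((φ.toOrderHom k : Fin (n+3)) : ℕ) < n + 2)
    (ψ : a ⟶ SimplexCategory.mk (n+1))
    (hψ : ∀ k, ((ψ.toOrderHom k : Fin (n+2)) : ℕ) = ((φ.toOrderHom k : Fin (n+3)) : ℕ)) :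
    fill X u y φ hφ = X.map ψ.op y := by
  have h1 : cnum φ = a.len + 1 := by
    have hle := cnum_le φ
    by_contra h
    have hlt : cnum φ < a.len + 1 := by omega
    have := (lt_cnum_iff φ ⟨cnum φ, hlt⟩).2 (hall _)
    simp at this
  rw [fill, dif_pos h1]
  have he : toLow φ (fun k => (lt_cnum_iff φ k).1 (by rw [h1]; exact k.isLt)) = ψ := by
    ext k
    rw [toLow_val, hψ]
  rw [he]

lemma fill_eq_top (u : (Λ[n+1, i] : SSet.{0}) ⟶ SSet.Dec X)
    (y : X.obj (op (SimplexCategory.mk (n+1))))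
    {a : SimplexCategory} (φ : a ⟶ SimplexCategory.mk (n+2))
    (hφ : Set.range φ.toOrderHom ∪ {i.castSucc} ≠ Set.univ)
    (hall : ∀ k, ((φ.toOrderHom k : Fin (n+3)) : ℕ) = n + 2) :
    fill X u y φ hφ = X.map (SimplexCategory.const a (SimplexCategory.mk 1) 1).op
      (u.app (op (SimplexCategory.mk 0))
        (hornElt (SimplexCategory.const (SimplexCategory.mk 0) (SimplexCategory.mk (n+1)) i)
          vertI_mem)) := by
  have h0 : cnum φ = 0 := by
    by_contra h
    have hpos : 0 < cnum φ := by omega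
    have := (lt_cnum_iff φ ⟨0, by omega⟩).1 (by simpa using hpos)
    rw [hall] at this
    omega
  rw [fill, dif_neg (by omega), dif_pos h0]

lemma fill_eq_mid (u : (Λ[n+1, i] : SSet.{0}) ⟶ SSet.Dec X)
    (y : X.obj (op (SimplexCategory.mk (n+1))))
    {a : SimplexCategory} (φ : a ⟶ SimplexCategory.mk (n+2))
    (hφ : Set.range φ.toOrderHom ∪ {i.castSucc} ≠ Set.univ)
    (m₁ : ℕ) (hm : m₁ + 1 ≤ a.len)
    (α₁ : SimplexCategory.mk m₁ ⟶ SimplexCategory.mk (n+1))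
    (hα₁ : Set.range α₁.toOrderHom ∪ {i} ≠ Set.univ)
    (ρ : a ⟶ shiftObj (SimplexCategory.mk m₁))
    (hρ : ∀ k : Fin (a.len + 1), ((ρ.toOrderHom k : Fin (m₁+2)) : ℕ) = min (k : ℕ) (m₁+1))
    (hfact : ∀ k : Fin (a.len + 1), ((φ.toOrderHom k : Fin (n+3)) : ℕ)
      = (((shiftMap α₁).toOrderHom (ρ.toOrderHom k) : Fin (n+3)) : ℕ)) :
    fill X u y φ hφ = X.map ρ.op (u.app (op (SimplexCategory.mk m₁)) (hornElt α₁ hα₁)) := by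
  have key : ∀ k : Fin (a.len + 1),
      (((φ.toOrderHom k : Fin (n+3)) : ℕ) < n + 2 ↔ (k : ℕ) < m₁ + 1) := by
    intro k
    rw [hfact k]
    by_cases hk : (k : ℕ) < m₁ + 1
    · rw [shiftMap_apply_lt α₁ (ρ.toOrderHom k) (by rw [hρ]; simp only [len_mk]; omega)]
      refine iff_of_true ?_ hk
      exact Nat.lt_of_lt_of_le (val_lt _) (by omega)
    · rw [shiftMap_apply_last α₁ (ρ.toOrderHom k) (by rw [hρ]; simp only [len_mk]; omega)]
      simp only [len_mk]
      omega
  have hc : cnum φ = m₁ + 1 := by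
    have hle := cnum_le φ
    by_contra h
    rcases Nat.lt_or_ge (cnum φ) (m₁ + 1) with h2 | h2
    · have hk := (key ⟨cnum φ, by omega⟩).2 (by simpa using h2)
      have := (lt_cnum_iff φ ⟨cnum φ, by omega⟩).2 hk
      simp at this
    · have hlt := (lt_cnum_iff φ ⟨m₁ + 1, by omega⟩).1 (by simpa using by omega)
      have := (key ⟨m₁ + 1, by omega⟩).1 hlt
      simp at this
  rw [fill, dif_neg (by omega), dif_neg (by omega)]
  obtain rfl : m₁ = cnum φ - 1 := by omega
  have hproj : proj φ (by omega) (cnum_le φ) = ρ := by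
    ext k
    rw [proj_val, hρ]
  have hcore : core φ (by omega) (cnum_le φ) = α₁ := by
    ext j
    rw [core_val]
    have hj : (j : ℕ) < cnum φ - 1 + 1 := j.isLt
    have hfa := hfact ⟨(j : ℕ), by omega⟩
    rw [shiftMap_apply_lt α₁ _ (by rw [hρ]; simp only [len_mk]; omega)] at hfa
    rw [hfa]
    refine congrArg (fun z => ((α₁.toOrderHom z : Fin (n+2)) : ℕ)) (Fin.ext ?_)
    simp only [len_mk]
    rw [hρ]
    simp only []
    omega
  rw [hproj, hornElt_eq _ hα₁ hcore]

lemma comp_val {a b : SimplexCategory} (g : b ⟶ a) (φ : a ⟶ SimplexCategory.mk (n+2))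
    (k : Fin (b.len + 1)) :
    ((g ≫ φ).toOrderHom k : Fin (n+3)) = φ.toOrderHom (g.toOrderHom k) := rfl

lemma all_top_of_cnum_zero {a : SimplexCategory} (φ : a ⟶ SimplexCategory.mk (n+2))
    (h : cnum φ = 0) (k : Fin (a.len + 1)) : ((φ.toOrderHom k : Fin (n+3)) : ℕ) = n + 2 := by
  have hiff := (lt_cnum_iff φ k).2
  have hb := val_lt (φ.toOrderHom k)
  by_contra hne
  have := hiff (by omega)
  omega

lemma all_low_of_cnum_max {a : SimplexCategory} (φ : a ⟶ SimplexCategory.mk (n+2))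
    (h : cnum φ = a.len + 1) (k : Fin (a.len + 1)) :
    ((φ.toOrderHom k : Fin (n+3)) : ℕ) < n + 2 :=
  (lt_cnum_iff φ k).1 (by rw [h]; exact k.isLt)

/-- Restrict the codomain of a morphism. -/
def press {a b : SimplexCategory} (g : b ⟶ a) (d : ℕ)
    (hd : ∀ k : Fin (b.len+1), ((g.toOrderHom k : Fin (a.len + 1)) : ℕ) < d + 1) :
    b ⟶ SimplexCategory.mk d :=
  Hom.mk
    { toFun := fun k => ⟨((g.toOrderHom k : Fin (a.len + 1)) : ℕ), hd k⟩
      monotone' := fun _ _ hkl => g.toOrderHom.monotone hkl }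

lemma press_val {a b : SimplexCategory} (g : b ⟶ a) (d : ℕ) (hd : _)
    (k : Fin (b.len + 1)) :
    (((press g d hd).toOrderHom k : Fin (d + 1)) : ℕ)
      = ((g.toOrderHom k : Fin (a.len + 1)) : ℕ) := rfl

/-- The edge of `Δ[n+1]` with endpoints `p ≤ q`. -/
def edge2 (p q : Fin (n+2)) (hpq : p ≤ q) : SimplexCategory.mk 1 ⟶ SimplexCategory.mk (n+1) :=
  Hom.mk
    { toFun := fun k => if (k : ℕ) = 0 then p else q
      monotone' := by
        intro k l hkl
        have hkl' : (k : ℕ) ≤ (l : ℕ) := hkl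
        by_cases hk : (k : ℕ) = 0
        · by_cases hl : (l : ℕ) = 0
          · simp [hk, hl]
          · simp [hk, hl, hpq]
        · have hl : ¬ (l : ℕ) = 0 := by omega
          simp [hk, hl] }

lemma edge2_val (p q : Fin (n+2)) (hpq : p ≤ q) (k : Fin 2) :
    (edge2 p q hpq).toOrderHom k = if (k : ℕ) = 0 then p else q := rfl

lemma u_nat (u : (Λ[n+1, i] : SSet.{0}) ⟶ SSet.Dec X) {aa bb : SimplexCategory} (f : aa ⟶ bb)
    (α : (Λ[n+1, i] : SSet.{0}).obj (op bb)) :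
    u.app (op aa) ((Λ[n+1, i] : SSet.{0}).map f.op α)
      = X.map (shiftMap f).op (u.app (op bb) α) :=
  NatTrans.naturality_apply u f.op α

lemma horn_map_hornElt {N : ℕ} {ii : Fin (N + 2)} {a b : SimplexCategory} (f : b ⟶ a)
    (ψ : a ⟶ SimplexCategory.mk (N + 1)) (h : _) (h₂ : _) :
    (Λ[N+1, ii] : SSet.{0}).map f.op (hornElt ψ h) = hornElt (f ≫ ψ) h₂ :=
  Subtype.ext rfl

lemma fact_core_proj {a : SimplexCategory} (φ : a ⟶ SimplexCategory.mk (n+2))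
    (h1 : 0 < cnum φ) (h2 : cnum φ ≤ a.len + 1) (k : Fin (a.len + 1)) :
    ((φ.toOrderHom k : Fin (n+3)) : ℕ)
      = (((shiftMap (core φ h1 h2)).toOrderHom ((proj φ h1 h2).toOrderHom k) : Fin (n+3)) : ℕ)
    := by
  by_cases hk : (k : ℕ) < cnum φ
  · rw [shiftMap_apply_lt _ _ (by rw [proj_val]; simp only [len_mk]; omega)]
    rw [core_val]
    refine (congrArg (fun z => ((φ.toOrderHom z : Fin (n+3)) : ℕ)) (Fin.ext ?_)).symm
    show ((((proj φ h1 h2).toOrderHom k : Fin (cnum φ - 1 + 2)) : ℕ)) = (k : ℕ)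
    rw [proj_val]
    omega
  · rw [shiftMap_apply_last _ _ (by rw [proj_val]; simp only [len_mk]; omega)]
    simp only [len_mk]
    have hiff := (lt_cnum_iff φ k).2
    have hb := val_lt (φ.toOrderHom k)
    by_contra hne
    have := hiff (by omega)
    omega

/-- The crucial consistency: the image of the last vertex does not depend on which horn
vertex we use to compute it. -/
lemma endpoint (u : (Λ[n+1, i] : SSet.{0}) ⟶ SSet.Dec X) (j : Fin (n+2))
    (hj : Set.range ((SimplexCategory.const (SimplexCategory.mk 0) (SimplexCategory.mk (n+1))
        j).toOrderHom) ∪ {i} ≠ Set.univ) :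
    X.map (SimplexCategory.const (SimplexCategory.mk 0) (SimplexCategory.mk 1) 1).op
      (u.app (op (SimplexCategory.mk 0))
        (hornElt (SimplexCategory.const (SimplexCategory.mk 0) (SimplexCategory.mk (n+1)) j) hj))
    = X.map (SimplexCategory.const (SimplexCategory.mk 0) (SimplexCategory.mk 1) 1).op
      (u.app (op (SimplexCategory.mk 0))
        (hornElt (SimplexCategory.const (SimplexCategory.mk 0) (SimplexCategory.mk (n+1)) i)
          vertI_mem)) := by
  by_cases hji : j = i
  · subst hji; rfl
  · obtain ⟨w, hw1, hw2⟩ := (ne_univ_iff i _).1 hj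
    have hwj : w ≠ j := by
      intro h
      exact hw1 ⟨0, by subst h; rfl⟩
    have e : SimplexCategory.mk 1 ⟶ SimplexCategory.mk (n+1) := edge2 (min i j) (max i j) min_le_max
    have he_mem : Set.range (edge2 (min i j) (max i j) min_le_max).toOrderHom ∪ {i}
        ≠ Set.univ := by
      rw [ne_univ_iff]
      refine ⟨w, ?_, hw2⟩
      rintro ⟨k, hk⟩
      rw [edge2_val] at hk
      by_cases hk0 : (k : ℕ) = 0
      · rw [if_pos hk0] at hk
        rcases min_choice i j with hm | hm <;> rw [hm] at hk
        · exact hw2 hk.symm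
        · exact hwj hk.symm
      · rw [if_neg hk0] at hk
        rcases max_choice i j with hm | hm <;> rw [hm] at hk
        · exact hw2 hk.symm
        · exact hwj hk.symm
    have main : ∀ (c : SimplexCategory.mk 0 ⟶ SimplexCategory.mk 1),
        X.map (SimplexCategory.const (SimplexCategory.mk 0) (SimplexCategory.mk 1) 1).op
          (u.app (op (SimplexCategory.mk 0))
            ((Λ[n+1, i] : SSet.{0}).map c.op (hornElt _ he_mem)))
        = X.map (SimplexCategory.const (SimplexCategory.mk 0) (SimplexCategory.mk 2) 2).op
            (u.app (op (SimplexCategory.mk 1)) (hornElt _ he_mem)) := by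
      intro c
      erw [u_nat, ← FunctorToTypes.map_comp_apply, ← op_comp]
      have hcomp : SimplexCategory.const (SimplexCategory.mk 0) (SimplexCategory.mk 1) 1
          ≫ shiftMap c = SimplexCategory.const (SimplexCategory.mk 0) (SimplexCategory.mk 2) 2
          := by
        ext k
        erw [comp_toOrderHom]
      erw [hcomp]
      rfl
    -- positions of j and i on the edge
    have hj_eq : (Λ[n+1, i] : SSet.{0}).map
        (SimplexCategory.const (SimplexCategory.mk 0) (SimplexCategory.mk 1)
          (if j ≤ i then 0 else 1)).op (hornElt _ he_mem)
        = hornElt (SimplexCategory.const (SimplexCategory.mk 0) (SimplexCategory.mk (n+1)) j) hj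
        := by
      refine Subtype.ext (congrArg ULift.up ?_)
      show SimplexCategory.const (SimplexCategory.mk 0) (SimplexCategory.mk 1)
          (if j ≤ i then 0 else 1) ≫ edge2 (min i j) (max i j) min_le_max = _
      rw [SimplexCategory.const_comp]
      congr 1
      rw [edge2_val]
      by_cases hle : j ≤ i
      · rw [if_pos hle, if_pos (by simp : ((0 : Fin 2) : ℕ) = 0)]
        exact min_eq_right hle
      · rw [if_neg hle, if_neg (by simp : ¬ ((1 : Fin 2) : ℕ) = 0)]
        exact max_eq_right (le_of_not_ge hle)
    have hi_eq : (Λ[n+1, i] : SSet.{0}).map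
        (SimplexCategory.const (SimplexCategory.mk 0) (SimplexCategory.mk 1)
          (if j ≤ i then 1 else 0)).op (hornElt _ he_mem)
        = hornElt (SimplexCategory.const (SimplexCategory.mk 0) (SimplexCategory.mk (n+1)) i)
            vertI_mem := by
      refine Subtype.ext (congrArg ULift.up ?_)
      show SimplexCategory.const (SimplexCategory.mk 0) (SimplexCategory.mk 1)
          (if j ≤ i then 1 else 0) ≫ edge2 (min i j) (max i j) min_le_max = _
      rw [SimplexCategory.const_comp]
      congr 1
      rw [edge2_val]
      by_cases hle : j ≤ i
      · rw [if_pos hle, if_neg (by simp : ¬ ((1 : Fin 2) : ℕ) = 0)]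
        exact max_eq_left hle
      · rw [if_neg hle, if_pos (by simp : ((0 : Fin 2) : ℕ) = 0)]
        exact min_eq_left (le_of_not_ge hle)
    rw [← hj_eq, ← hi_eq, main, main]

lemma fill_natural (u : (Λ[n+1, i] : SSet.{0}) ⟶ SSet.Dec X)
    (y : X.obj (op (SimplexCategory.mk (n+1))))
    (sq : ∀ (aa : SimplexCategory) (α : (Λ[n+1, i] : SSet.{0}).obj (op aa)),
      X.map (lastFaceIncl aa).op (u.app (op aa) α) = X.map (α.1.down).op y)
    {a b : SimplexCategory} (g : b ⟶ a) (φ : a ⟶ SimplexCategory.mk (n+2))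
    (hφ : Set.range φ.toOrderHom ∪ {i.castSucc} ≠ Set.univ)
    (hgφ : Set.range (g ≫ φ).toOrderHom ∪ {i.castSucc} ≠ Set.univ) :
    fill X u y (g ≫ φ) hgφ = X.map g.op (fill X u y φ hφ) := by
  by_cases hc1 : cnum φ = a.len + 1
  · have hall := all_low_of_cnum_max φ hc1
    have hallg : ∀ k : Fin (b.len + 1), (((g ≫ φ).toOrderHom k : Fin (n+3)) : ℕ) < n + 2 :=
      fun k => hall (g.toOrderHom k)
    rw [fill_eq_low X u y φ hφ hall (toLow φ hall) (fun k => rfl),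
      fill_eq_low X u y (g ≫ φ) hgφ hallg (g ≫ toLow φ hall) (fun k => rfl),
      op_comp, FunctorToTypes.map_comp_apply]
  · by_cases hc0 : cnum φ = 0
    · have hall := all_top_of_cnum_zero φ hc0
      have hallg : ∀ k : Fin (b.len + 1), (((g ≫ φ).toOrderHom k : Fin (n+3)) : ℕ) = n + 2 :=
        fun k => hall (g.toOrderHom k)
      erw [fill_eq_top X u y φ hφ hall, fill_eq_top X u y (g ≫ φ) hgφ hallg,
        ← FunctorToTypes.map_comp_apply, ← op_comp,
        show g ≫ SimplexCategory.const a (SimplexCategory.mk 1) 1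
          = SimplexCategory.const b (SimplexCategory.mk 1) 1 from by ext k; rfl]
    · -- middle case for φ
      have hpos : 0 < cnum φ := by omega
      have hle : cnum φ ≤ a.len := by have := cnum_le φ; omega
      have hmid := fill_eq_mid X u y φ hφ (cnum φ - 1) (by omega)
        (core φ hpos (cnum_le φ)) (core_mem hφ hpos (cnum_le φ) hle)
        (proj φ hpos (cnum_le φ)) (fun k => proj_val φ hpos (cnum_le φ) k)
        (fun k => fact_core_proj φ hpos (cnum_le φ) k)
      have hkey : ∀ k : Fin (b.len + 1), ((k : ℕ) < cnum (g ≫ φ)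
          ↔ ((g.toOrderHom k : Fin (a.len + 1)) : ℕ) < cnum φ) :=
        fun k => Iff.trans (lt_cnum_iff (g ≫ φ) k) (Iff.symm (lt_cnum_iff φ (g.toOrderHom k)))
      by_cases hg1 : cnum (g ≫ φ) = b.len + 1
      · -- the composite misses the top
        have hallg := all_low_of_cnum_max (g ≫ φ) hg1
        have hglt : ∀ k : Fin (b.len + 1), ((g.toOrderHom k : Fin (a.len + 1)) : ℕ) < cnum φ :=
          fun k => (lt_cnum_iff φ (g.toOrderHom k)).2 (hallg k)
        have hpress : ∀ k : Fin (b.len + 1),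
            ((g.toOrderHom k : Fin (a.len + 1)) : ℕ) < (cnum φ - 1) + 1 :=
          fun k => by have := hglt k; omega
        erw [fill_eq_low X u y (g ≫ φ) hgφ hallg
            (press g (cnum φ - 1) hpress ≫ core φ hpos (cnum_le φ)) (fun k => rfl), hmid,
          ← FunctorToTypes.map_comp_apply, ← op_comp]
        have hsplit : g ≫ proj φ hpos (cnum_le φ)
            = press g (cnum φ - 1) hpress ≫ lastFaceIncl (SimplexCategory.mk (cnum φ - 1)) := by
          ext k
          have h1 : (((g ≫ proj φ hpos (cnum_le φ)).toOrderHom k : Fin (cnum φ - 1 + 2)) : ℕ)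
              = ((g.toOrderHom k : Fin (a.len + 1)) : ℕ) :=
            (proj_val φ hpos (cnum_le φ) (g.toOrderHom k)).trans (by have := hglt k; omega)
          have h2 : (((press g (cnum φ - 1) hpress
              ≫ lastFaceIncl (SimplexCategory.mk (cnum φ - 1))).toOrderHom k :
                Fin (cnum φ - 1 + 2)) : ℕ)
              = ((g.toOrderHom k : Fin (a.len + 1)) : ℕ) :=
            lastFaceIncl_apply _ _
          exact h1.trans h2.symm
        erw [hsplit, op_comp, Functor.map_comp_apply X (lastFaceIncl (SimplexCategory.mk (cnum φ - 1))).op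
          (press g (cnum φ - 1) hpress).op, Functor.map_comp_apply X (core φ hpos (cnum_le φ)).op (press g (cnum φ - 1) hpress).op,
          sq (SimplexCategory.mk (cnum φ - 1))
            (hornElt (core φ hpos (cnum_le φ)) (core_mem hφ hpos (cnum_le φ) hle))]
        rfl
      · by_cases hg0 : cnum (g ≫ φ) = 0
        · -- the composite is constant at the top
          have hallg := all_top_of_cnum_zero (g ≫ φ) hg0
          erw [fill_eq_top X u y (g ≫ φ) hgφ hallg, hmid,
            ← FunctorToTypes.map_comp_apply, ← op_comp]
          have hgtop : ∀ k : Fin (b.len + 1),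
              ¬ ((g.toOrderHom k : Fin (a.len + 1)) : ℕ) < cnum φ := by
            intro k hk
            have h1 := (lt_cnum_iff φ (g.toOrderHom k)).1 hk
            have h2 : ((φ.toOrderHom (g.toOrderHom k) : Fin (n+3)) : ℕ) = n + 2 := hallg k
            omega
          have hsplit : g ≫ proj φ hpos (cnum_le φ)
              = SimplexCategory.const b (SimplexCategory.mk 0) 0
                ≫ (SimplexCategory.const (SimplexCategory.mk 0) (SimplexCategory.mk 1) 1
                  ≫ shiftMap (SimplexCategory.const (SimplexCategory.mk 0)
                      (SimplexCategory.mk (cnum φ - 1)) 0)) := by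
            ext k
            have h1 : (((g ≫ proj φ hpos (cnum_le φ)).toOrderHom k : Fin (cnum φ - 1 + 2)) : ℕ)
                = cnum φ - 1 + 1 :=
              (proj_val φ hpos (cnum_le φ) (g.toOrderHom k)).trans
                (by have := hgtop k; have := cnum_le φ; omega)
            have h2 : (((shiftMap (SimplexCategory.const (SimplexCategory.mk 0)
                (SimplexCategory.mk (cnum φ - 1)) 0)).toOrderHom
                ((SimplexCategory.const (SimplexCategory.mk 0) (SimplexCategory.mk 1)
                  1).toOrderHom ((SimplexCategory.const b (SimplexCategory.mk 0)
                    0).toOrderHom k))) : ℕ) = cnum φ - 1 + 1 :=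
              (shiftMap_apply_last
                (SimplexCategory.const (SimplexCategory.mk 0)
                  (SimplexCategory.mk (cnum φ - 1)) 0)
                ((SimplexCategory.const (SimplexCategory.mk 0) (SimplexCategory.mk 1)
                  1).toOrderHom ((SimplexCategory.const b (SimplexCategory.mk 0)
                    0).toOrderHom k))
                (by rw [SimplexCategory.const_apply]; simp [len_mk])).trans
                  (by simp [len_mk])
            exact h1.trans h2.symm
          erw [hsplit, op_comp, op_comp, FunctorToTypes.map_comp_apply,
            FunctorToTypes.map_comp_apply,
            ← u_nat X u (SimplexCategory.const (SimplexCategory.mk 0)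
              (SimplexCategory.mk (cnum φ - 1)) 0)
              (hornElt (core φ hpos (cnum_le φ)) (core_mem hφ hpos (cnum_le φ) hle))]
          obtain ⟨w, hw1, hw2⟩ := (ne_univ_iff i _).1 (core_mem hφ hpos (cnum_le φ) hle)
          have hvm : Set.range ((SimplexCategory.const (SimplexCategory.mk 0)
              (SimplexCategory.mk (n+1))
              ((core φ hpos (cnum_le φ)).toOrderHom 0)).toOrderHom) ∪ {i} ≠ Set.univ :=
            vert_mem ⟨w, fun h => hw1 ⟨0, h.symm⟩, hw2⟩
          have helt : (Λ[n+1, i] : SSet.{0}).map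
              (SimplexCategory.const (SimplexCategory.mk 0)
                (SimplexCategory.mk (cnum φ - 1)) 0).op
              (hornElt (core φ hpos (cnum_le φ)) (core_mem hφ hpos (cnum_le φ) hle))
              = hornElt (SimplexCategory.const (SimplexCategory.mk 0) (SimplexCategory.mk (n+1))
                  ((core φ hpos (cnum_le φ)).toOrderHom 0)) hvm :=
            Subtype.ext (congrArg ULift.up
              (SimplexCategory.const_comp _ (core φ hpos (cnum_le φ)) 0))
          erw [helt, endpoint X u _ hvm,
            SimplexCategory.const_fac_thru_zero b (SimplexCategory.mk 1) 1,
            op_comp, FunctorToTypes.map_comp_apply]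
        · -- middle case for the composite as well
          have hgpos : 0 < cnum (g ≫ φ) := by omega
          have hgle : cnum (g ≫ φ) ≤ b.len := by have := cnum_le (g ≫ φ); omega
          have hmidg := fill_eq_mid X u y (g ≫ φ) hgφ (cnum (g ≫ φ) - 1) (by omega)
            (core (g ≫ φ) hgpos (cnum_le _)) (core_mem hgφ hgpos (cnum_le _) hgle)
            (proj (g ≫ φ) hgpos (cnum_le _)) (fun k => proj_val _ hgpos (cnum_le _) k)
            (fun k => fact_core_proj _ hgpos (cnum_le _) k)
          erw [hmidg, hmid, ← FunctorToTypes.map_comp_apply, ← op_comp]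
          have hcb : cnum (g ≫ φ) - 1 ≤ b.len := by omega
          have hseg : ∀ jj : Fin ((SimplexCategory.mk (cnum (g ≫ φ) - 1)).len + 1),
              ((((castIncl hcb ≫ g)).toOrderHom jj : Fin (a.len + 1)) : ℕ)
                < (cnum φ - 1) + 1 := by
            intro jj
            have hjj := val_lt jj
            have h2 := (hkey ((castIncl hcb).toOrderHom jj)).1
              (by rw [castIncl_val]; omega)
            have h3 : ((((castIncl hcb ≫ g)).toOrderHom jj : Fin (a.len + 1)) : ℕ)
                = ((g.toOrderHom ((castIncl hcb).toOrderHom jj) : Fin (a.len + 1)) : ℕ) := rfl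
            omega
          set g₁ := press (castIncl hcb ≫ g) (cnum φ - 1) hseg with hg₁def
          have hsplit : g ≫ proj φ hpos (cnum_le φ)
              = proj (g ≫ φ) hgpos (cnum_le _) ≫ shiftMap g₁ := by
            ext k
            by_cases hk : (k : ℕ) < cnum (g ≫ φ)
            · have hprojk : (((proj (g ≫ φ) hgpos (cnum_le _)).toOrderHom k :
                  Fin (cnum (g ≫ φ) - 1 + 2)) : ℕ) = (k : ℕ) := by
                rw [proj_val]; omega
              have hlt' : (((proj (g ≫ φ) hgpos (cnum_le _)).toOrderHom k :
                  Fin (cnum (g ≫ φ) - 1 + 2)) : ℕ)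
                  < (SimplexCategory.mk (cnum (g ≫ φ) - 1)).len + 1 := by
                simp only [len_mk]; omega
              have hR := shiftMap_apply_lt g₁
                ((proj (g ≫ φ) hgpos (cnum_le _)).toOrderHom k) hlt'
              have hg1v : ((g₁.toOrderHom ⟨(((proj (g ≫ φ) hgpos (cnum_le _)).toOrderHom k :
                    Fin (cnum (g ≫ φ) - 1 + 2)) : ℕ), hlt'⟩ : Fin (cnum φ - 1 + 1)) : ℕ)
                  = ((g.toOrderHom k : Fin (a.len + 1)) : ℕ) := by
                refine congrArg (fun z : Fin (b.len + 1) =>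
                  ((g.toOrderHom z : Fin (a.len + 1)) : ℕ)) (Fin.ext ?_)
                exact hprojk
              have h1 : (((g ≫ proj φ hpos (cnum_le φ)).toOrderHom k :
                  Fin (cnum φ - 1 + 2)) : ℕ) = ((g.toOrderHom k : Fin (a.len + 1)) : ℕ) :=
                (proj_val φ hpos (cnum_le φ) (g.toOrderHom k)).trans
                  (by have := (hkey k).1 hk; omega)
              exact h1.trans (hR.trans hg1v).symm
            · have h1 : (((g ≫ proj φ hpos (cnum_le φ)).toOrderHom k :
                  Fin (cnum φ - 1 + 2)) : ℕ) = cnum φ - 1 + 1 :=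
                (proj_val φ hpos (cnum_le φ) (g.toOrderHom k)).trans
                  (by have h2 := (hkey k).2; have := cnum_le φ;
                      by_contra hcon
                      have h3 : ((g.toOrderHom k : Fin (a.len + 1)) : ℕ) < cnum φ := by omega
                      exact hk (h2 h3))
              have hnlt : ¬ (((proj (g ≫ φ) hgpos (cnum_le _)).toOrderHom k :
                  Fin (cnum (g ≫ φ) - 1 + 2)) : ℕ)
                  < (SimplexCategory.mk (cnum (g ≫ φ) - 1)).len + 1 := by
                rw [proj_val]; simp only [len_mk]; omega
              have hR : (((shiftMap g₁).toOrderHom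
                  ((proj (g ≫ φ) hgpos (cnum_le _)).toOrderHom k)) : ℕ) = cnum φ - 1 + 1 :=
                (shiftMap_apply_last g₁
                  ((proj (g ≫ φ) hgpos (cnum_le _)).toOrderHom k) hnlt).trans
                  (by simp [len_mk])
              exact h1.trans hR.symm
          erw [hsplit, op_comp, FunctorToTypes.map_comp_apply,
            ← u_nat X u g₁ (hornElt (core φ hpos (cnum_le φ))
              (core_mem hφ hpos (cnum_le φ) hle))]
          have hcoreg : g₁ ≫ core φ hpos (cnum_le φ) = core (g ≫ φ) hgpos (cnum_le _) := by
            ext jj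
            rfl
          have helt : (Λ[n+1, i] : SSet.{0}).map g₁.op
              (hornElt (core φ hpos (cnum_le φ)) (core_mem hφ hpos (cnum_le φ) hle))
              = hornElt (core (g ≫ φ) hgpos (cnum_le _))
                  (core_mem hgφ hgpos (cnum_le _) hgle) :=
            Subtype.ext (congrArg ULift.up hcoreg)
          rw [helt]

/-- The identity simplex of `Δ[N]`. -/
def sid (N : ℕ) : (Δ[N] : SSet.{0}).obj (op (SimplexCategory.mk N)) := ⟨𝟙 _⟩

lemma sset_yoneda_app {N : ℕ} {Y : SSet.{0}} (f : (Δ[N] : SSet.{0}) ⟶ Y) (m : SimplexCategoryᵒᵖ)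
    (β : (Δ[N] : SSet.{0}).obj m) :
    f.app m β = Y.map (β.down).op
      (f.app (op (SimplexCategory.mk N)) (sid N)) := by
  have h := NatTrans.naturality_apply f (β.down).op (sid N)
  have hβ : (Δ[N] : SSet.{0}).map (β.down).op (sid N) = β := by
    rw [stdSimplex.map_apply]
    apply ULift.ext
    exact Category.comp_id _
  rw [hβ] at h
  exact h

lemma lastFaceIncl_mem :
    Set.range ((lastFaceIncl (SimplexCategory.mk (n+1))).toOrderHom) ∪ {i.castSucc}
      ≠ Set.univ := by
  erw [ne_univ_iff]
  refine ⟨Fin.last (n+2), ?_, ?_⟩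
  · rintro ⟨k, hk⟩
    have := congrArg Fin.val hk
    rw [lastFaceIncl_apply] at this
    have hv := val_lt k
    simp only [Fin.val_last] at this
    omega
  · intro hcon
    have := congrArg Fin.val hcon
    simp only [Fin.val_last, Fin.coe_castSucc] at this
    have := i.isLt
    omega

lemma delta_mem (j : Fin (n+2)) (hj : j ≠ i) :
    Set.range (SimplexCategory.δ j).toOrderHom ∪ {i} ≠ Set.univ := by
  rw [ne_univ_iff]
  refine ⟨j, ?_, hj⟩
  rintro ⟨k, hk⟩
  exact Fin.succAbove_ne j k hk

lemma shiftMap_face_mem (j : Fin (n+2)) (hj : j ≠ i) :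
    Set.range ((shiftMap (SimplexCategory.δ j)).toOrderHom) ∪ {i.castSucc} ≠ Set.univ := by
  erw [ne_univ_iff]
  refine ⟨j.castSucc, ?_, fun hcon => hj (Fin.castSucc_injective _ hcon)⟩
  rintro ⟨k, hk⟩
  have hkv := congrArg Fin.val hk
  by_cases hklt : (k : ℕ) < n + 1
  · rw [shiftMap_apply_lt _ _ hklt, Fin.coe_castSucc] at hkv
    exact Fin.succAbove_ne j ⟨(k : ℕ), hklt⟩ (Fin.ext hkv)
  · rw [shiftMap_apply_last _ _ hklt, Fin.coe_castSucc] at hkv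
    simp only [len_mk] at hkv
    have := j.isLt
    omega

end

lemma decAug_isKanFibration (X : SSet.{0}) (hX : SSet.IsKanComplex X) :
    SSet.IsKanFibration (SSet.decAug X) := by
  intro n i
  constructor
  intro u v sqc
  set y := v.app (op (SimplexCategory.mk (n+1))) (sid (n+1)) with hy
  have hv : ∀ (m : SimplexCategoryᵒᵖ) (β : (Δ[n+1] : SSet.{0}).obj m),
      v.app m β = X.map (β.down).op y := fun m β => sset_yoneda_app v m β
  have hsq : ∀ (aa : SimplexCategory) (α : (Λ[n+1, i] : SSet.{0}).obj (op aa)),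
      X.map (lastFaceIncl aa).op (u.app (op aa) α) = X.map ((α.1).down).op y := by
    intro aa α
    have h2 := ConcreteCategory.congr_hom (NatTrans.congr_app sqc.w (op aa)) α
    exact (show X.map (lastFaceIncl aa).op (u.app (op aa) α) = v.app (op aa) α.1 from h2).trans
      (hv _ _)
  -- extend to the bigger horn
  let h : (Λ[n+2, Fin.castSucc i] : SSet.{0}) ⟶ X :=
    { app := fun m => TypeCat.ofHom (fun α => fill X u y (α.1.down) α.2)
      naturality := by
        intro m m' gg
        ext α
        exact fill_natural X u y hsq gg.unop α.1.down α.2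
          ((Λ[n+2, Fin.castSucc i] : SSet.{0}).map gg α).2 }
  obtain ⟨σ, hσ⟩ := hX (n := n+1) (i := i.castSucc) h
  set x := σ.app (op (SimplexCategory.mk (n+2))) (sid (n+2)) with hx
  have hσ' : ∀ (aa : SimplexCategory) (ψ : aa ⟶ SimplexCategory.mk (n+2))
      (hψ : Set.range ψ.toOrderHom ∪ {i.castSucc} ≠ Set.univ),
      X.map ψ.op x = fill X u y ψ hψ := by
    intro aa ψ hψ
    have h1 := ConcreteCategory.congr_hom (NatTrans.congr_app hσ (op aa)) (hornElt ψ hψ)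
    have h2 := sset_yoneda_app σ (op aa) (⟨ψ⟩ : (Δ[n+2] : SSet.{0}).obj (op aa))
    exact (show X.map ψ.op x = σ.app (op aa) (⟨ψ⟩ : (Δ[n+2] : SSet.{0}).obj (op aa))
      from h2.symm).trans
      (show σ.app (op aa) (⟨ψ⟩ : (Δ[n+2] : SSet.{0}).obj (op aa)) = fill X u y ψ hψ
        from h1.symm)
  -- the lift
  have hincly : X.map (lastFaceIncl (SimplexCategory.mk (n+1))).op x = y := by
    have hall : ∀ k, (((lastFaceIncl (SimplexCategory.mk (n+1))).toOrderHom k :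
        Fin (n+3)) : ℕ) < n + 2 := by
      intro k
      rw [lastFaceIncl_apply]
      have := val_lt k
      omega
    have h1 := hσ' (SimplexCategory.mk (n+1)) (lastFaceIncl (SimplexCategory.mk (n+1)))
      lastFaceIncl_mem
    rw [fill_eq_low X u y _ lastFaceIncl_mem hall (𝟙 (SimplexCategory.mk (n+1)))
      (fun k => (lastFaceIncl_apply _ _).symm)] at h1
    erw [op_id, FunctorToTypes.map_id_apply] at h1
    exact h1
  refine ⟨⟨⟨{ app := fun m => TypeCat.ofHom (fun β => X.map (shiftFunctor.map β.down).op x)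
              naturality := ?_ }, ?_, ?_⟩⟩⟩
  · intro m m' gg
    ext β
    show X.map (shiftFunctor.map (gg.unop ≫ β.down)).op x = _
    erw [Functor.map_comp, op_comp, FunctorToTypes.map_comp_apply]
    rfl
  · -- fac_left
    apply SSet.horn.hom_ext
    intro j hj
    show X.map (shiftMap (SimplexCategory.δ j)).op x
      = u.app (op (SimplexCategory.mk n)) (SSet.horn.face i j hj)
    have h1 : X.map (shiftMap (SimplexCategory.δ j)).op x
        = fill X u y (shiftMap (SimplexCategory.δ j)) (shiftMap_face_mem j hj) :=
      hσ' (SimplexCategory.mk (n+1)) (shiftMap (SimplexCategory.δ j)) (shiftMap_face_mem j hj)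
    have hρ : ∀ k : Fin ((SimplexCategory.mk (n+1)).len + 1),
        (((𝟙 (SimplexCategory.mk (n+1)) : SimplexCategory.mk (n+1)
          ⟶ shiftObj (SimplexCategory.mk n)).toOrderHom k : Fin (n+2)) : ℕ)
          = min (k : ℕ) (n + 1) := by
      intro k
      have := val_lt k
      show (k : ℕ) = min (k : ℕ) (n + 1)
      omega
    have h2 := fill_eq_mid X u y (shiftMap (SimplexCategory.δ j)) (shiftMap_face_mem j hj) n
      (le_of_eq (len_mk (n+1)).symm) (SimplexCategory.δ j) (delta_mem j hj)
      (𝟙 (SimplexCategory.mk (n+1))) hρ (fun k => rfl)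
    have h3 : X.map (𝟙 (SimplexCategory.mk (n+1))).op
        (u.app (op (SimplexCategory.mk n))
          (hornElt (SimplexCategory.δ j) (delta_mem j hj)))
        = u.app (op (SimplexCategory.mk n))
            (hornElt (SimplexCategory.δ j) (delta_mem j hj)) := by
      erw [op_id, FunctorToTypes.map_id_apply]
    exact (h1.trans h2).trans (h3.trans
      (congrArg (u.app (op (SimplexCategory.mk n))) (Subtype.ext rfl)))
  · -- fac_right
    apply SSet.hom_ext
    intro m
    ext β
    have hnat2 := NatTrans.naturality_apply (SSet.decAug X) (β.down).op x
    exact hnat2.trans ((congrArg (X.map (β.down).op) hincly).trans (hv m β).symm)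

end DecPf

/-- If `X` is a Kan complex, then its décalage `Dec X` is a Kan complex and the
natural last-face map `∂ : Dec X ⟶ X` is a Kan fibration. -/
theorem dec_isKanComplex_and_decAug_isKanFibration (X : SSet.{0}) (hX : SSet.IsKanComplex X) :
    SSet.IsKanComplex (SSet.Dec X) ∧ SSet.IsKanFibration (SSet.decAug X) := by
  have hfib := DecPf.decAug_isKanFibration X hX
  refine ⟨?_, hfib⟩
  intro n i σ₀
  obtain ⟨τ, hτ⟩ := hX (σ₀ ≫ SSet.decAug X)
  have sq : CommSq σ₀ (Λ[n+1, i].ι) (SSet.decAug X) τ := ⟨hτ⟩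
  haveI := hfib (n := n) (i := i)
  exact ⟨sq.lift, sq.fac_left.symm⟩

end DecalageProofAux
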